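/- Let d ≥ 1 and let δ > 0 satisfy δ⁻¹·ℓ(δ) < 1/(2(d+1)), where ℓ(δ) = 1 − √(1 − (1/2)(d/(d+1))δ²). Then the sequence defined by δ₀ = δ and δ_{n+1} = (d/(d+1))·δ_n + 2ℓ(δ_n) converges to 0; moreover δ_{n+1} ≤ α·δ_n for some α < 1 independent of n. -/

import Mathlib

open Filter Topology

/-- Key concavity-type inequality: `ℓ(t) ≤ (t/Δ) ℓ(Δ)` for `0 ≤ t ≤ Δ` in the domain. -/
lemma ell_le_scale (c t Δ : ℝ) (hc : 0 ≤ c) (ht0 : 0 ≤ t) (htΔ : t ≤ Δ)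
    (hΔ : 0 < Δ) (hcΔ : c * Δ ^ 2 ≤ 1) :
    1 - Real.sqrt (1 - c * t ^ 2) ≤ t / Δ * (1 - Real.sqrt (1 - c * Δ ^ 2)) := by
  set s := t / Δ with hs
  have hs0 : 0 ≤ s := div_nonneg ht0 hΔ.le
  have hs1 : s ≤ 1 := (div_le_one hΔ).2 htΔ
  have ht : t = s * Δ := by rw [hs, div_mul_cancel₀ t hΔ.ne']
  set r := Real.sqrt (1 - c * Δ ^ 2) with hr
  have hr0 : 0 ≤ r := Real.sqrt_nonneg _
  have hr1 : r ≤ 1 := by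
    rw [hr]
    nlinarith [Real.sqrt_le_one.mpr (show (1 : ℝ) - c * Δ ^ 2 ≤ 1 by nlinarith [mul_nonneg hc (sq_nonneg Δ)])]
  have hr2 : r ^ 2 = 1 - c * Δ ^ 2 := Real.sq_sqrt (by linarith)
  have hct : c * t ^ 2 = s ^ 2 * (1 - r ^ 2) := by rw [ht, hr2]; ring
  have hrhs : 0 ≤ 1 - s * (1 - r) := by nlinarith
  have hsq : (1 - s * (1 - r)) ^ 2 ≤ 1 - c * t ^ 2 := by
    rw [hct]
    nlinarith [mul_nonneg (mul_nonneg hs0 (sub_nonneg.2 hs1)) (sub_nonneg.2 hr1)]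
  have := Real.sqrt_le_sqrt hsq
  rw [Real.sqrt_sq hrhs] at this
  nlinarith

/-- Let `ℓ(t) = 1 − √(1 − (1/2)(d/(d+1))t²)` and suppose `δ > 0` (with `δ` in the domain of
`ℓ`) satisfies `δ⁻¹ ℓ(δ) < 1/(2(d+1))`. Then the sequence `δ₀ = δ`,
`δ_{n+1} = (d/(d+1)) δ_n + 2 ℓ(δ_n)` converges to `0`; moreover there is an `α < 1`,
independent of `n`, with `δ_{n+1} ≤ α δ_n` for all `n`. -/
theorem subdivision_normalization_sequence_tendsto_zero (d : ℕ) (hd : 1 ≤ d)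
    (δ : ℝ) (hδpos : 0 < δ)
    (hdom : δ ≤ Real.sqrt (2 * ((d : ℝ) + 1) / d))
    (hδ : δ⁻¹ * (1 - Real.sqrt (1 - 1 / 2 * ((d : ℝ) / (d + 1)) * δ ^ 2)) <
      1 / (2 * ((d : ℝ) + 1)))
    (seq : ℕ → ℝ) (hseq0 : seq 0 = δ)
    (hrec : ∀ n, seq (n + 1) =
      (d : ℝ) / (d + 1) * seq n +
        2 * (1 - Real.sqrt (1 - 1 / 2 * ((d : ℝ) / (d + 1)) * seq n ^ 2))) :
    Tendsto seq atTop (𝓝 0) ∧ ∃ α : ℝ, α < 1 ∧ ∀ n, seq (n + 1) ≤ α * seq n := by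
  have hD1 : (1 : ℝ) ≤ (d : ℝ) := by exact_mod_cast hd
  set D : ℝ := (d : ℝ) with hDdef
  have hD0 : 0 < D := by linarith
  have hD1' : 0 < D + 1 := by linarith
  set c : ℝ := 1 / 2 * (D / (D + 1)) with hc
  have hc0 : 0 ≤ c := by positivity
  -- δ² ≤ 2(D+1)/D
  have hX : (0 : ℝ) ≤ 2 * (D + 1) / D := by positivity
  have hδ2 : δ ^ 2 ≤ 2 * (D + 1) / D := by
    nlinarith [Real.sq_sqrt hX, Real.sqrt_nonneg (2 * (D + 1) / D)]
  have hcδ : c * δ ^ 2 ≤ 1 := by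
    have h := (le_div_iff₀ hD0).1 hδ2
    have he : c * δ ^ 2 = δ ^ 2 * D / (2 * (D + 1)) := by rw [hc]; field_simp
    rw [he, div_le_one (by positivity)]
    linarith
  set ℓδ : ℝ := 1 - Real.sqrt (1 - c * δ ^ 2) with hℓδ
  have hℓδ0 : 0 ≤ ℓδ := by
    have := Real.sqrt_le_one.mpr (show (1 : ℝ) - c * δ ^ 2 ≤ 1 by nlinarith [mul_nonneg hc0 (sq_nonneg δ)])
    simp only [hℓδ]; linarith
  set α : ℝ := D / (D + 1) + 2 * (δ⁻¹ * ℓδ) with hα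
  have hα1 : α < 1 := by
    have h2 : δ⁻¹ * ℓδ < 1 / (2 * (D + 1)) := hδ
    rw [lt_div_iff₀ (by positivity : (0:ℝ) < 2 * (D + 1))] at h2
    have hαmul : α * (D + 1) = D + δ⁻¹ * ℓδ * (2 * (D + 1)) := by
      rw [hα]; field_simp
    have hlt : α * (D + 1) < 1 * (D + 1) := by rw [hαmul]; linarith
    exact lt_of_mul_lt_mul_right hlt hD1'.le
  have hα0 : 0 ≤ α := by
    have : 0 ≤ δ⁻¹ * ℓδ := mul_nonneg (inv_nonneg.2 hδpos.le) hℓδ0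
    rw [hα]; positivity
  -- one-step bound
  have step : ∀ t : ℝ, 0 ≤ t → t ≤ δ →
      D / (D + 1) * t + 2 * (1 - Real.sqrt (1 - c * t ^ 2)) ≤ α * t := by
    intro t ht0 htδ
    have key := ell_le_scale c t δ hc0 ht0 htδ hδpos hcδ
    have : t / δ = t * δ⁻¹ := div_eq_mul_inv t δ
    rw [hα, hℓδ]
    have key2 : 2 * (1 - Real.sqrt (1 - c * t ^ 2)) ≤
        2 * (t / δ * (1 - Real.sqrt (1 - c * δ ^ 2))) := by linarith
    have heq : D / (D + 1) * t + 2 * (t / δ * (1 - Real.sqrt (1 - c * δ ^ 2))) =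
        (D / (D + 1) + 2 * (δ⁻¹ * (1 - Real.sqrt (1 - c * δ ^ 2)))) * t := by
      field_simp
    linarith
  have ellnn : ∀ t : ℝ, 0 ≤ 1 - Real.sqrt (1 - c * t ^ 2) := by
    intro t
    have := Real.sqrt_le_one.mpr (show (1 : ℝ) - c * t ^ 2 ≤ 1 by nlinarith [mul_nonneg hc0 (sq_nonneg t)])
    linarith
  -- invariant
  have bounds : ∀ n, 0 ≤ seq n ∧ seq n ≤ δ := by
    intro n
    induction n with
    | zero => exact ⟨by rw [hseq0]; exact hδpos.le, le_of_eq hseq0⟩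
    | succ n ih =>
      have h1 : seq (n + 1) ≤ α * seq n := by
        rw [hrec n]; exact step (seq n) ih.1 ih.2
      constructor
      · rw [hrec n]
        have h2 := ellnn (seq n)
        have h3 : 0 ≤ D / (D + 1) * seq n :=
          mul_nonneg (div_nonneg hD0.le hD1'.le) ih.1
        linarith
      · nlinarith [mul_nonneg (sub_nonneg.2 hα1.le) ih.1, ih.2]
  have hstep : ∀ n, seq (n + 1) ≤ α * seq n := by
    intro n
    rw [hrec n]
    exact step (seq n) (bounds n).1 (bounds n).2
  have hpow : ∀ n, seq n ≤ α ^ n * δ := by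
    intro n
    induction n with
    | zero => simp [hseq0]
    | succ n ih =>
      calc seq (n + 1) ≤ α * seq n := hstep n
        _ ≤ α * (α ^ n * δ) := mul_le_mul_of_nonneg_left ih hα0
        _ = α ^ (n + 1) * δ := by ring
  refine ⟨?_, α, hα1, hstep⟩
  have htend : Tendsto (fun n => α ^ n * δ) atTop (𝓝 0) := by
    have := (tendsto_pow_atTop_nhds_zero_of_lt_one hα0 hα1).mul_const δ
    simpa using this
  exact squeeze_zero (fun n => (bounds n).1) hpow htend
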